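/- For fixed x₀ ∈ (0,1), the function F(y) = (e^{(x₀-2)y} - e^{-x₀y})/(2(1-e^{-2y})) is injective on ((ln(2-x₀)-ln x₀)/(2(1-x₀)), ∞); consequently, if y₁, y₂ lie in this interval and F(y₁) = F(y₂), then y₁ = y₂. -/

import Mathlib

open Real Set

lemma aux_sinh_c (c t : ℝ) : HasDerivAt (fun t => Real.sinh (c*t)) (c * Real.cosh (c*t)) t := by
  have h := (Real.hasDerivAt_sinh (c*t)).comp t ((hasDerivAt_id t).const_mul c)
  simpa [mul_comm, Function.comp_def] using h

lemma aux_cosh_c (c t : ℝ) : HasDerivAt (fun t => Real.cosh (c*t)) (c * Real.sinh (c*t)) t := by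
  have h := (Real.hasDerivAt_cosh (c*t)).comp t ((hasDerivAt_id t).const_mul c)
  simpa [mul_comm, Function.comp_def] using h

lemma aux1 (c y : ℝ) (hc0 : 0 < c) (hc1 : c < 1) (hy : 0 < y) :
    0 < Real.sinh (c*y) * Real.cosh y - c * Real.cosh (c*y) * Real.sinh y := by
  set h : ℝ → ℝ := fun t => Real.sinh (c*t) * Real.cosh t - c * Real.cosh (c*t) * Real.sinh t
    with hh
  have hd : ∀ t, HasDerivAt h ((1 - c^2) * (Real.sinh (c*t) * Real.sinh t)) t := by
    intro t
    have h1 := (aux_sinh_c c t).mul (Real.hasDerivAt_cosh t)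
    have h2 := ((aux_cosh_c c t).mul (Real.hasDerivAt_sinh t)).const_mul c
    have h2' : HasDerivAt (fun y => c * Real.cosh (c*y) * Real.sinh y)
        (c * (c * Real.sinh (c*t) * Real.sinh t + Real.cosh (c*t) * Real.cosh t)) t := by
      simpa [mul_assoc] using h2
    have := h1.sub h2'
    exact this.congr_deriv (by ring)
  have hmono : StrictMonoOn h (Set.Ici 0) := by
    apply strictMonoOn_of_deriv_pos (convex_Ici 0)
    · exact fun t _ => ((hd t).continuousAt).continuousWithinAt
    · intro t ht
      rw [interior_Ici] at ht
      rw [(hd t).deriv]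
      have h1 : 0 < Real.sinh (c*t) := Real.sinh_pos_iff.2 (mul_pos hc0 ht)
      have h2 : 0 < Real.sinh t := Real.sinh_pos_iff.2 ht
      exact mul_pos (by nlinarith) (mul_pos h1 h2)
  have h0 : h 0 = 0 := by simp [hh]
  have := hmono (Set.self_mem_Ici) (Set.mem_Ici.2 hy.le) hy
  rw [h0] at this
  simpa [hh] using this

lemma aux2 (c : ℝ) (hc0 : 0 < c) (hc1 : c < 1) :
    StrictMonoOn (fun y : ℝ => -Real.sinh (c*y) / (2 * Real.sinh y)) (Set.Ioi 0) := by
  apply strictMonoOn_of_deriv_pos (convex_Ioi 0)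
  · apply ContinuousOn.div
    · exact (Real.continuous_sinh.comp (continuous_const.mul continuous_id)).neg.continuousOn
    · exact (continuous_const.mul Real.continuous_sinh).continuousOn
    · intro y hy
      have : 0 < Real.sinh y := Real.sinh_pos_iff.2 hy
      positivity
  · intro y hy
    rw [interior_Ioi] at hy
    have hsy : 0 < Real.sinh y := Real.sinh_pos_iff.2 hy
    have hden : (2 : ℝ) * Real.sinh y ≠ 0 := by positivity
    have hder : HasDerivAt (fun y : ℝ => -Real.sinh (c*y) / (2 * Real.sinh y))
        ((-(c * Real.cosh (c*y)) * (2 * Real.sinh y) -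
          (-Real.sinh (c*y)) * (2 * Real.cosh y)) / (2 * Real.sinh y)^2) y :=
      (aux_sinh_c c y).neg.div ((Real.hasDerivAt_sinh y).const_mul 2) hden
    rw [hder.deriv]
    apply div_pos
    · have := aux1 c y hc0 hc1 hy
      nlinarith
    · positivity

theorem stmt_17 (x₀ : ℝ) (hx₀ : x₀ ∈ Set.Ioo (0:ℝ) 1) :
    Set.InjOn (fun y : ℝ =>
        (Real.exp ((x₀ - 2) * y) - Real.exp (-x₀ * y)) / (2 * (1 - Real.exp (-2 * y))))
      (Set.Ioi ((Real.log (2 - x₀) - Real.log x₀) / (2 * (1 - x₀)))) := by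
  obtain ⟨hx0, hx1⟩ := hx₀
  set T := (Real.log (2 - x₀) - Real.log x₀) / (2 * (1 - x₀)) with hT
  have hT0 : 0 < T := by
    apply div_pos
    · have : Real.log x₀ < Real.log (2 - x₀) := Real.log_lt_log hx0 (by linarith)
      linarith
    · linarith
  set c := 1 - x₀ with hc
  have hc0 : 0 < c := by linarith
  have hc1 : c < 1 := by linarith
  have hsub : Set.Ioi T ⊆ Set.Ioi (0:ℝ) := fun y hy => lt_trans hT0 hy
  have hinj : Set.InjOn (fun y : ℝ => -Real.sinh (c*y) / (2 * Real.sinh y)) (Set.Ioi T) :=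
    ((aux2 c hc0 hc1).mono hsub).injOn
  apply hinj.congr
  intro y hy
  have hy0 : 0 < y := hT0.trans hy
  have hsy : 0 < Real.sinh y := Real.sinh_pos_iff.2 hy0
  have h1 : Real.exp (-2 * y) < 1 := by
    rw [Real.exp_lt_one_iff]; linarith
  have hden1 : (2:ℝ) * (1 - Real.exp (-2 * y)) ≠ 0 := by nlinarith
  have hden2 : (2:ℝ) * Real.sinh y ≠ 0 := ne_of_gt (by linarith)
  simp only
  rw [Real.sinh_eq, Real.sinh_eq]
  have hs' : 0 < Real.exp y - Real.exp (-y) := by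
    have := hsy; rw [Real.sinh_eq] at this; linarith
  have hdd : (2:ℝ) * ((Real.exp y - Real.exp (-y)) / 2) ≠ 0 := by
    intro h; rw [mul_div_cancel₀ _ (two_ne_zero)] at h; linarith
  rw [div_eq_div_iff hdd hden1]
  have e1 : Real.exp ((x₀ - 2) * y) = Real.exp (x₀*y) * Real.exp (-2*y) := by
    rw [← Real.exp_add]; ring_nf
  have e2 : Real.exp (c * y) = Real.exp y * Real.exp (-x₀ * y) := by
    rw [← Real.exp_add, hc]; ring_nf
  have e3 : Real.exp (-(c * y)) = Real.exp (-y) * Real.exp (x₀ * y) := by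
    rw [← Real.exp_add, hc]; ring_nf
  have e4 : Real.exp (-2*y) = Real.exp (-y) * Real.exp (-y) := by
    rw [← Real.exp_add]; ring_nf
  have e5 : Real.exp y * Real.exp (-y) = 1 := by rw [← Real.exp_add]; simp
  rw [e1, e2, e3, e4]
  linear_combination (Real.exp (-x₀ * y) * Real.exp (-y) - Real.exp (-y) * Real.exp (x₀ * y)) * e5
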